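/- An undirected graph G is an orthology graph, i.e., G = Θ(T,t) for some tree T with leaf set V(G) and event labeling t of its inner vertices by {•,□}, if and only if G is a cograph. -/

import Mathlib

/-- A planted phylogenetic rooted tree, encoded by a parent function on a
finite vertex set.  The root `0_T` is a fixed point of `parent`; every vertex
reaches the root by iterating `parent`; the root has exactly one child
(`planted`); and every inner vertex (non-root vertex having a child) has at
least two children (`phylo`). -/
structure PPTree where
  V : Type
  [fintypeV : Fintype V]
  [decEqV : DecidableEq V]
  root : V
  parent : V → V
  parent_root : parent root = root
  reach : ∀ v : V, ∃ n : ℕ, parent^[n] v = root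
  planted : ∃! v : V, v ≠ root ∧ parent v = root
  phylo : ∀ v : V, v ≠ root → (∃ u, parent u = v ∧ u ≠ v) →
      ∃ u w, parent u = v ∧ parent w = v ∧ u ≠ w ∧ u ≠ v ∧ w ≠ v

attribute [instance] PPTree.fintypeV PPTree.decEqV

namespace PPTree

variable (T : PPTree)

/-- `T.le x y` means `x ⪯_T y`, i.e. `y` is an ancestor of `x` (or `x = y`). -/
def le (x y : T.V) : Prop := ∃ n : ℕ, T.parent^[n] x = y

/-- `T.lt x y` means `x ≺_T y`. -/
def lt (x y : T.V) : Prop := T.le x y ∧ x ≠ y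

/-- Leaves are the `⪯_T`-minimal vertices, i.e. vertices without children. -/
def isLeaf (v : T.V) : Prop := ∀ u, T.parent u = v → u = v

/-- Inner vertices: neither leaves nor the planted root. -/
def inner (v : T.V) : Prop := v ≠ T.root ∧ ¬ T.isLeaf v

/-- The last common ancestor of two vertices: the `⪯_T`-minimal common
ancestor. -/
noncomputable def lca (x y : T.V) : T.V :=
  @Classical.epsilon _ ⟨T.root⟩
    fun v => T.le x v ∧ T.le y v ∧ ∀ w, T.le x w → T.le y w → T.le v w

/-- The last common ancestor of a set of vertices. -/
noncomputable def lcaSet (A : Set T.V) : T.V :=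
  @Classical.epsilon _ ⟨T.root⟩
    fun v => (∀ a ∈ A, T.le a v) ∧ ∀ w, (∀ a ∈ A, T.le a w) → T.le v w

/-- `ρ_T`, the unique child of the planted root. -/
noncomputable def rho : T.V := T.planted.choose

theorem rho_ne_root : T.rho ≠ T.root := T.planted.choose_spec.1.1

/-- Edges of `T`, identified with their child endpoint: the vertex `v ≠ 0_T`
represents the edge `(parent v, v)`. -/
abbrev Edge := {v : T.V // v ≠ T.root}

/-- The union `V(T) ∪ E(T)`. -/
abbrev VE := T.V ⊕ T.Edge

/-- The ancestor order `⪯_T` extended to `V(T) ∪ E(T)`: for an edge `e = uv`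
(`u` the parent of `v`), `x ⪯ e` iff `x ⪯ v`, `e ⪯ x` iff `u ⪯ x`, and
`e ⪯ f` iff the child endpoints are comparable accordingly. -/
def leVE : T.VE → T.VE → Prop
  | Sum.inl x, Sum.inl y => T.le x y
  | Sum.inl x, Sum.inr e => T.le x e.1
  | Sum.inr e, Sum.inl y => T.le (T.parent e.1) y
  | Sum.inr e, Sum.inr f => T.le e.1 f.1

def ltVE (a b : T.VE) : Prop := T.leVE a b ∧ a ≠ b

/-- Two elements of `V(T) ∪ E(T)` are comparable. -/
def cmpVE (a b : T.VE) : Prop := T.leVE a b ∨ T.leVE b a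

/-- Membership in `L(T)` for elements of `V(T) ∪ E(T)`. -/
def isLeafVE : T.VE → Prop
  | Sum.inl v => T.isLeaf v
  | Sum.inr _ => False

/-- Map an element of `V(T) ∪ E(T)` to a vertex (an edge `uv` is sent to its
child endpoint `v`). -/
def toVertex : T.VE → T.V
  | Sum.inl v => v
  | Sum.inr e => e.1

end PPTree

/-- Axioms (R0)–(R3) of a reconciliation map `μ : V(T) → V(S) ∪ E(S)`. -/
structure IsRecon (T S : PPTree) (μ : T.V → S.VE) : Prop where
  R0 : ∀ x, μ x = Sum.inl S.root ↔ x = T.root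
  R1 : ∀ x, S.isLeafVE (μ x) ↔ T.isLeaf x
  R2 : ∀ x y, T.lt y x → (∃ u, μ x = Sum.inl u) → (∃ v, μ y = Sum.inl v) → μ x ≠ μ y
  R3 : ∀ x y, T.lt y x → ¬ S.ltVE (μ x) (μ y)

/-- A reconciliation is HGT-free if the images of the endpoints of every edge
of `T` are `⪯_S`-comparable. -/
def IsHGTFree (T S : PPTree) (μ : T.V → S.VE) : Prop :=
  ∀ v : T.V, v ≠ T.root → S.cmpVE (μ (T.parent v)) (μ v)

/-- `(T,S,μ,σ)` is a σ-reconciliation when `μ` restricted to `L(T)` equals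
`σ`. -/
def SigmaCompat (T S : PPTree) (μ : T.V → S.VE) (σ : T.V → S.V) : Prop :=
  ∀ x, T.isLeaf x → μ x = Sum.inl (σ x)

/-- A time map for `T`. -/
def IsTimeMap (T : PPTree) (τ : T.V → ℝ) : Prop :=
  ∀ x y, T.lt x y → τ x < τ y

/-- Axioms (S0)–(S3) of a relaxed scenario `(T,S,μ,τ_T,τ_S)`. -/
structure IsRelaxedScenario (T S : PPTree) (μ : T.V → S.VE)
    (τT : T.V → ℝ) (τS : S.V → ℝ) : Prop where
  timeT : IsTimeMap T τT
  timeS : IsTimeMap S τS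
  S0 : ∀ x, μ x = Sum.inl S.root ↔ x = T.root
  S1 : ∀ x, S.isLeafVE (μ x) ↔ T.isLeaf x
  S2 : ∀ x v, μ x = Sum.inl v → τS v = τT x
  S3 : ∀ x (e : S.Edge), μ x = Sum.inr e → τS e.1 < τT x ∧ τT x < τS (S.parent e.1)

/-- A planted phylogenetic tree whose leaf set is (identified with) the finite
type `L` via the embedding `emb`. -/
structure LeafTree (L : Type) [Fintype L] [DecidableEq L] extends PPTree where
  emb : L → toPPTree.V
  emb_inj : Function.Injective emb
  emb_leaf : ∀ v : L, toPPTree.isLeaf (emb v)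
  emb_surj : ∀ l, toPPTree.isLeaf l → ∃ v : L, emb v = l

/-- The tree `T` displays the rooted triple `ab|c`:
`lca(a,b) ≺ lca(a,c) = lca(b,c)`. -/
def displaysTriple (T : PPTree) (a b c : T.V) : Prop :=
  T.lt (T.lca a b) (T.lca a c) ∧ T.lca a c = T.lca b c

section BMG

variable {V Y : Type} [Fintype V] [DecidableEq V]

/-- `y` is a best match of `x` in the leaf-colored tree `(T,σ)`:
`σ(x) ≠ σ(y)` and `lca(x,y) ⪯ lca(x,y')` for all leaves `y'` of the same color
as `y`. -/
def LeafTree.bestMatch (T : LeafTree V) (σ : V → Y) (x y : V) : Prop :=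
  σ x ≠ σ y ∧ ∀ y' : V, σ y' = σ y →
    T.toPPTree.le (T.toPPTree.lca (T.emb x) (T.emb y))
      (T.toPPTree.lca (T.emb x) (T.emb y'))

/-- `(G,σ)` is the best match graph `𝔅(T,σ)` of the leaf-colored tree
`(T,σ)`. -/
def Explains (T : LeafTree V) (σ : V → Y) (G : V → V → Prop) : Prop :=
  ∀ x y : V, G x y ↔ T.bestMatch σ x y

/-- The triple `ab|b'` is informative for `(G,σ)`. -/
def Informative (G : V → V → Prop) (σ : V → Y) (a b b' : V) : Prop :=
  a ≠ b ∧ a ≠ b' ∧ b ≠ b' ∧ σ a ≠ σ b ∧ σ b = σ b' ∧ G a b ∧ ¬ G a b'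

/-- The triple `ab|b'` is forbidden for `(G,σ)`. -/
def Forbidden (G : V → V → Prop) (σ : V → Y) (a b b' : V) : Prop :=
  a ≠ b ∧ a ≠ b' ∧ b ≠ b' ∧ σ a ≠ σ b ∧ σ b = σ b' ∧ G a b ∧ G a b'

end BMG

/-- A cograph: an undirected graph with no induced path `P₄` on four
vertices. -/
def IsCograph {V : Type} (G : SimpleGraph V) : Prop :=
  ¬ ∃ a b c d : V, a ≠ b ∧ a ≠ c ∧ a ≠ d ∧ b ≠ c ∧ b ≠ d ∧ c ≠ d ∧
      G.Adj a b ∧ G.Adj b c ∧ G.Adj c d ∧ ¬ G.Adj a c ∧ ¬ G.Adj a d ∧ ¬ G.Adj b d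

namespace PPTree

variable (T : PPTree)

theorem iterate_root (n : ℕ) : T.parent^[n] T.root = T.root := by
  induction n with
  | zero => rfl
  | succ n ih => rw [Function.iterate_succ_apply', ih, T.parent_root]

variable {T}

theorem le_refl (x : T.V) : T.le x x := ⟨0, rfl⟩

theorem le_trans {x y z : T.V} (h1 : T.le x y) (h2 : T.le y z) : T.le x z := by
  obtain ⟨n, hn⟩ := h1; obtain ⟨m, hm⟩ := h2
  exact ⟨m + n, by rw [Function.iterate_add_apply, hn, hm]⟩

theorem le_root (x : T.V) : T.le x T.root := T.reach x

theorem eq_root_of_periodic {x : T.V} {k : ℕ} (hk : 0 < k)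
    (h : T.parent^[k] x = x) : x = T.root := by
  have hmul : ∀ j : ℕ, T.parent^[j * k] x = x := by
    intro j
    induction j with
    | zero => simp
    | succ j ih => rw [Nat.succ_mul, Function.iterate_add_apply, h, ih]
  obtain ⟨N, hN⟩ := T.reach x
  have h1 : T.parent^[N * k] x = x := hmul N
  have h2 : N ≤ N * k := Nat.le_mul_of_pos_right N hk
  have : T.parent^[N * k] x = T.root := by
    have := Function.iterate_add_apply T.parent (N * k - N) N x
    rw [Nat.sub_add_cancel h2] at this
    rw [this, hN, iterate_root]
  rw [← h1, this]

theorem le_antisymm {x y : T.V} (h1 : T.le x y) (h2 : T.le y x) : x = y := by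
  obtain ⟨n, hn⟩ := h1; obtain ⟨m, hm⟩ := h2
  rcases Nat.eq_zero_or_pos (m + n) with h | h
  · rw [Nat.add_eq_zero] at h
    rw [← hn, h.2]; rfl
  · have hper : T.parent^[m + n] x = x := by
      rw [Function.iterate_add_apply, hn, hm]
    have hx : x = T.root := eq_root_of_periodic h hper
    subst hx
    rw [← hn, iterate_root]

theorem le_total_of_le {x a b : T.V} (h1 : T.le x a) (h2 : T.le x b) :
    T.le a b ∨ T.le b a := by
  obtain ⟨n, hn⟩ := h1; obtain ⟨m, hm⟩ := h2
  rcases Nat.le_total n m with h | h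
  · left
    refine ⟨m - n, ?_⟩
    have := Function.iterate_add_apply T.parent (m - n) n x
    rw [Nat.sub_add_cancel h] at this
    rw [← hn, ← this, hm]
  · right
    refine ⟨n - m, ?_⟩
    have := Function.iterate_add_apply T.parent (n - m) m x
    rw [Nat.sub_add_cancel h] at this
    rw [← hm, ← this, hn]

theorem exists_lca_spec (x y : T.V) :
    ∃ v, T.le x v ∧ T.le y v ∧ ∀ w, T.le x w → T.le y w → T.le v w := by
  classical
  obtain ⟨N, hN⟩ := T.reach x
  have hex : ∃ k, T.le y (T.parent^[k] x) := ⟨N, by rw [hN]; exact le_root y⟩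
  refine ⟨T.parent^[Nat.find hex] x, ⟨Nat.find hex, rfl⟩, Nat.find_spec hex, ?_⟩
  rintro w ⟨m, hm⟩ hyw
  rcases Nat.le_total (Nat.find hex) m with h | h
  · refine ⟨m - Nat.find hex, ?_⟩
    have := Function.iterate_add_apply T.parent (m - Nat.find hex) (Nat.find hex) x
    rw [Nat.sub_add_cancel h] at this
    rw [← this, hm]
  · rcases Nat.lt_or_ge m (Nat.find hex) with hlt | hge
    · exact absurd (hm ▸ hyw) (Nat.find_min hex hlt)
    · have : Nat.find hex = m := Nat.le_antisymm hge h |>.symm ▸ rfl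
      rw [this, hm]
      exact le_refl w

theorem lca_spec (x y : T.V) :
    T.le x (T.lca x y) ∧ T.le y (T.lca x y) ∧
      ∀ w, T.le x w → T.le y w → T.le (T.lca x y) w :=
  Classical.epsilon_spec (exists_lca_spec x y)

theorem lca_eq_of_spec {x y v : T.V} (h1 : T.le x v) (h2 : T.le y v)
    (h3 : ∀ w, T.le x w → T.le y w → T.le v w) : T.lca x y = v := by
  obtain ⟨hx, hy, hmin⟩ := lca_spec x y
  exact le_antisymm (hmin v h1 h2) (h3 _ hx hy)

theorem lca_comm (x y : T.V) : T.lca x y = T.lca y x := by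
  obtain ⟨hx, hy, hmin⟩ := lca_spec y x
  exact lca_eq_of_spec hy hx fun w h1 h2 => hmin w h2 h1

theorem lca_triple (x y z : T.V) :
    (T.lca x y = T.lca x z ∧ T.le (T.lca y z) (T.lca x y)) ∨
    (T.lca x z = T.lca y z ∧ T.le (T.lca x y) (T.lca x z)) ∨
    (T.lca x y = T.lca y z ∧ T.le (T.lca x z) (T.lca x y)) := by
  obtain ⟨hxp, hyp, hminp⟩ := lca_spec x y
  obtain ⟨hxq, hzq, hminq⟩ := lca_spec x z
  obtain ⟨hyr, hzr, hminr⟩ := lca_spec y z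
  set p := T.lca x y
  set q := T.lca x z
  set r := T.lca y z
  rcases le_total_of_le hxp hxq with hpq | hqp
  · rcases le_total_of_le hyp hyr with hpr | hrp
    · -- le p q, le p r : q = r
      have hqr : T.le q r := hminq r (le_trans hxp hpr) hzr
      have hrq : T.le r q := hminr q (le_trans hyp hpq) hzq
      exact Or.inr (Or.inl ⟨le_antisymm hqr hrq, hpq⟩)
    · -- le p q, le r p : q ≤ p hence p = q, r ≤ p
      have hqp' : T.le q p := hminq p hxp (le_trans hzr hrp)
      exact Or.inl ⟨le_antisymm hpq hqp', hrp⟩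
  · rcases le_total_of_le hzq hzr with hqr | hrq
    · -- le q p, le q r : p = r
      have hpr : T.le p r := hminp r (le_trans hxq hqr) hyr
      have hrp : T.le r p := hminr p hyp (le_trans hzq hqp)
      exact Or.inr (Or.inr ⟨le_antisymm hpr hrp, hqp⟩)
    · -- le q p, le r q : p = q (le p q from min p) and r ≤ q ≤ p
      have hpq : T.le p q := hminp q hxq (le_trans hyr hrq)
      exact Or.inl ⟨le_antisymm hpq hqp, le_trans hrq hqp⟩

theorem parent_rho : T.parent T.rho = T.root := T.planted.choose_spec.1.2

theorem root_not_isLeaf : ¬ T.isLeaf T.root :=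
  fun h => T.rho_ne_root (h T.rho parent_rho)

theorem isLeaf_ne_root {v : T.V} (h : T.isLeaf v) : v ≠ T.root := by
  intro hv
  exact T.rho_ne_root ((h T.rho (by rw [parent_rho, hv])).trans hv)

theorem eq_rho_of_parent_eq_root {v : T.V} (h1 : v ≠ T.root)
    (h2 : T.parent v = T.root) : v = T.rho :=
  T.planted.choose_spec.2 v ⟨h1, h2⟩

theorem le_rho {v : T.V} (h : v ≠ T.root) : T.le v T.rho := by
  classical
  obtain ⟨N, hN⟩ := T.reach v
  have hex : ∃ n, T.parent^[n] v = T.root := ⟨N, hN⟩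
  set k := Nat.find hex with hk
  have hkspec : T.parent^[k] v = T.root := Nat.find_spec hex
  have hkpos : 0 < k := by
    rcases Nat.eq_zero_or_pos k with h0 | h0
    · rw [h0] at hkspec; exact absurd hkspec h
    · exact h0
  have hw : T.parent^[k - 1] v ≠ T.root := Nat.find_min hex (Nat.sub_lt hkpos one_pos)
  have hpw : T.parent (T.parent^[k - 1] v) = T.root := by
    have h2 : T.parent^[k - 1 + 1] v = T.root := by
      rw [Nat.sub_add_cancel hkpos]; exact hkspec
    rw [Function.iterate_succ_apply'] at h2
    exact h2
  have := eq_rho_of_parent_eq_root hw hpw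
  exact ⟨k - 1, this⟩

theorem not_le_root_rho : ¬ T.le T.root T.rho := by
  rintro ⟨n, hn⟩
  rw [iterate_root] at hn
  exact T.rho_ne_root hn.symm

theorem lca_ne_root {x y : T.V} (hx : x ≠ T.root) (hy : y ≠ T.root) :
    T.lca x y ≠ T.root := by
  obtain ⟨_, _, hmin⟩ := lca_spec x y
  intro h
  have := hmin T.rho (le_rho hx) (le_rho hy)
  rw [h] at this
  exact not_le_root_rho this

end PPTree
theorem orthology_forward {V : Type} [Fintype V] [DecidableEq V]
    (G : SimpleGraph V) (T : LeafTree V) (t : T.toPPTree.V → Bool)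
    (hspec : ∀ x y : V, G.Adj x y ↔
      x ≠ y ∧ t (T.toPPTree.lca (T.emb x) (T.emb y)) = true) :
    IsCograph G := by
  rintro ⟨a, b, c, d, hab, hac, had, hbc, hbd, hcd, Eab, Ebc, Ecd, Nac, Nad, Nbd⟩
  have tab : t (T.toPPTree.lca (T.emb a) (T.emb b)) = true := ((hspec a b).1 Eab).2
  have tbc : t (T.toPPTree.lca (T.emb b) (T.emb c)) = true := ((hspec b c).1 Ebc).2
  have tcd : t (T.toPPTree.lca (T.emb c) (T.emb d)) = true := ((hspec c d).1 Ecd).2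
  have tac : t (T.toPPTree.lca (T.emb a) (T.emb c)) = false := by
    have h : ¬ t (T.toPPTree.lca (T.emb a) (T.emb c)) = true :=
      fun h => Nac ((hspec a c).2 ⟨hac, h⟩)
    exact Bool.not_eq_true _ |>.mp h
  have tad : t (T.toPPTree.lca (T.emb a) (T.emb d)) = false := by
    have h : ¬ t (T.toPPTree.lca (T.emb a) (T.emb d)) = true :=
      fun h => Nad ((hspec a d).2 ⟨had, h⟩)
    exact Bool.not_eq_true _ |>.mp h
  -- triple (a,b,c): get le (lca a c) (lca a b)
  have h1 : T.toPPTree.le (T.toPPTree.lca (T.emb a) (T.emb c))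
      (T.toPPTree.lca (T.emb a) (T.emb b)) := by
    obtain h | h | h := PPTree.lca_triple (T.emb a) (T.emb b) (T.emb c)
    · rw [h.1, tac] at tab; exact absurd tab (by simp)
    · rw [h.1, tbc] at tac; exact absurd tac (by simp)
    · exact h.2
  -- triple (a,b,d): get le (lca a b) (lca a d)
  have h2 : T.toPPTree.le (T.toPPTree.lca (T.emb a) (T.emb b))
      (T.toPPTree.lca (T.emb a) (T.emb d)) := by
    have tbd : t (T.toPPTree.lca (T.emb b) (T.emb d)) = false := by
      have h : ¬ t (T.toPPTree.lca (T.emb b) (T.emb d)) = true :=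
        fun h => Nbd ((hspec b d).2 ⟨hbd, h⟩)
      exact Bool.not_eq_true _ |>.mp h
    obtain h | h | h := PPTree.lca_triple (T.emb a) (T.emb b) (T.emb d)
    · rw [h.1, tad] at tab; exact absurd tab (by simp)
    · exact h.2
    · rw [h.1, tbd] at tab; exact absurd tab (by simp)
  -- triple (a,c,d): lca a c = lca a d
  have h3 : T.toPPTree.lca (T.emb a) (T.emb c) = T.toPPTree.lca (T.emb a) (T.emb d) := by
    obtain h | h | h := PPTree.lca_triple (T.emb a) (T.emb c) (T.emb d)
    · exact h.1
    · rw [h.1, tcd] at tad; exact absurd tad (by simp)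
    · rw [h.1, tcd] at tac; exact absurd tac (by simp)
  rw [← h3] at h2
  have := PPTree.le_antisymm h2 h1
  rw [this, tac] at tab
  exact absurd tab (by simp)
section Glue

variable (T1 T2 : PPTree)

/-- Vertex set of the glued tree. -/
abbrev GlueV := Bool ⊕ ({v : T1.V // v ≠ T1.root} ⊕ {v : T2.V // v ≠ T2.root})

def glueParent : GlueV T1 T2 → GlueV T1 T2
  | Sum.inl _ => Sum.inl true
  | Sum.inr (Sum.inl v) =>
      if h : T1.parent v.1 = T1.root then Sum.inl false
      else Sum.inr (Sum.inl ⟨T1.parent v.1, h⟩)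
  | Sum.inr (Sum.inr v) =>
      if h : T2.parent v.1 = T2.root then Sum.inl false
      else Sum.inr (Sum.inr ⟨T2.parent v.1, h⟩)

theorem glueParent_pos1 (v : {v : T1.V // v ≠ T1.root}) (hp : T1.parent v.1 = T1.root) :
    glueParent T1 T2 (Sum.inr (Sum.inl v)) = Sum.inl false := by
  simp only [glueParent]; rw [dif_pos hp]

theorem glueParent_neg1 (v : {v : T1.V // v ≠ T1.root}) (hp : T1.parent v.1 ≠ T1.root) :
    glueParent T1 T2 (Sum.inr (Sum.inl v)) = Sum.inr (Sum.inl ⟨T1.parent v.1, hp⟩) := by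
  simp only [glueParent]; rw [dif_neg hp]

theorem glueParent_pos2 (v : {v : T2.V // v ≠ T2.root}) (hp : T2.parent v.1 = T2.root) :
    glueParent T1 T2 (Sum.inr (Sum.inr v)) = Sum.inl false := by
  simp only [glueParent]; rw [dif_pos hp]

theorem glueParent_neg2 (v : {v : T2.V // v ≠ T2.root}) (hp : T2.parent v.1 ≠ T2.root) :
    glueParent T1 T2 (Sum.inr (Sum.inr v)) = Sum.inr (Sum.inr ⟨T2.parent v.1, hp⟩) := by
  simp only [glueParent]; rw [dif_neg hp]

theorem glue_iterate_inl (n : ℕ) (b : Bool) :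
    ∃ b', (glueParent T1 T2)^[n] (Sum.inl b) = Sum.inl b' := by
  induction n generalizing b with
  | zero => exact ⟨b, rfl⟩
  | succ n ih => rw [Function.iterate_succ_apply]; exact ih true

theorem glue_mirror1 (n : ℕ) (v : {v : T1.V // v ≠ T1.root})
    (hn : T1.parent^[n] v.1 ≠ T1.root) :
    (glueParent T1 T2)^[n] (Sum.inr (Sum.inl v)) =
      Sum.inr (Sum.inl ⟨T1.parent^[n] v.1, hn⟩) := by
  induction n with
  | zero => rfl
  | succ n ih =>
    have hn' : T1.parent^[n] v.1 ≠ T1.root := by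
      intro hh; apply hn; rw [Function.iterate_succ_apply', hh, T1.parent_root]
    have hc : T1.parent (T1.parent^[n] v.1) ≠ T1.root := by
      rw [← Function.iterate_succ_apply' T1.parent n v.1]; exact hn
    rw [Function.iterate_succ_apply', ih hn', glueParent_neg1 T1 T2 _ hc]
    exact congrArg (fun z => Sum.inr (Sum.inl z))
      (Subtype.ext (Function.iterate_succ_apply' _ _ _).symm)

theorem glue_mirror2 (n : ℕ) (v : {v : T2.V // v ≠ T2.root})
    (hn : T2.parent^[n] v.1 ≠ T2.root) :
    (glueParent T1 T2)^[n] (Sum.inr (Sum.inr v)) =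
      Sum.inr (Sum.inr ⟨T2.parent^[n] v.1, hn⟩) := by
  induction n with
  | zero => rfl
  | succ n ih =>
    have hn' : T2.parent^[n] v.1 ≠ T2.root := by
      intro hh; apply hn; rw [Function.iterate_succ_apply', hh, T2.parent_root]
    have hc : T2.parent (T2.parent^[n] v.1) ≠ T2.root := by
      rw [← Function.iterate_succ_apply' T2.parent n v.1]; exact hn
    rw [Function.iterate_succ_apply', ih hn', glueParent_neg2 T1 T2 _ hc]
    exact congrArg (fun z => Sum.inr (Sum.inr z))
      (Subtype.ext (Function.iterate_succ_apply' _ _ _).symm)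

theorem glue_project1 (n : ℕ) (v w : {v : T1.V // v ≠ T1.root})
    (he : (glueParent T1 T2)^[n] (Sum.inr (Sum.inl v)) = Sum.inr (Sum.inl w)) :
    T1.parent^[n] v.1 = w.1 := by
  induction n generalizing v with
  | zero =>
    rw [Function.iterate_zero_apply] at he
    exact congrArg Subtype.val (Sum.inl.inj (Sum.inr.inj he))
  | succ n ih =>
    rw [Function.iterate_succ_apply] at he
    by_cases hp : T1.parent v.1 = T1.root
    · rw [glueParent_pos1 T1 T2 v hp] at he
      obtain ⟨b', hb⟩ := glue_iterate_inl T1 T2 n false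
      rw [hb] at he; exact absurd he (by simp)
    · rw [glueParent_neg1 T1 T2 v hp] at he
      rw [Function.iterate_succ_apply]
      exact ih ⟨T1.parent v.1, hp⟩ he

theorem glue_project2 (n : ℕ) (v w : {v : T2.V // v ≠ T2.root})
    (he : (glueParent T1 T2)^[n] (Sum.inr (Sum.inr v)) = Sum.inr (Sum.inr w)) :
    T2.parent^[n] v.1 = w.1 := by
  induction n generalizing v with
  | zero =>
    rw [Function.iterate_zero_apply] at he
    exact congrArg Subtype.val (Sum.inr.inj (Sum.inr.inj he))
  | succ n ih =>
    rw [Function.iterate_succ_apply] at he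
    by_cases hp : T2.parent v.1 = T2.root
    · rw [glueParent_pos2 T1 T2 v hp] at he
      obtain ⟨b', hb⟩ := glue_iterate_inl T1 T2 n false
      rw [hb] at he; exact absurd he (by simp)
    · rw [glueParent_neg2 T1 T2 v hp] at he
      rw [Function.iterate_succ_apply]
      exact ih ⟨T2.parent v.1, hp⟩ he

theorem glue_classify1 (n : ℕ) (v : {v : T1.V // v ≠ T1.root}) :
    (∃ u, (glueParent T1 T2)^[n] (Sum.inr (Sum.inl v)) = Sum.inr (Sum.inl u)) ∨
    (∃ b, (glueParent T1 T2)^[n] (Sum.inr (Sum.inl v)) = Sum.inl b) := by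
  induction n generalizing v with
  | zero => exact Or.inl ⟨v, rfl⟩
  | succ n ih =>
    rw [Function.iterate_succ_apply]
    by_cases hp : T1.parent v.1 = T1.root
    · rw [glueParent_pos1 T1 T2 v hp]
      exact Or.inr (glue_iterate_inl T1 T2 n false)
    · rw [glueParent_neg1 T1 T2 v hp]
      exact ih _

theorem glue_classify2 (n : ℕ) (v : {v : T2.V // v ≠ T2.root}) :
    (∃ u, (glueParent T1 T2)^[n] (Sum.inr (Sum.inr v)) = Sum.inr (Sum.inr u)) ∨
    (∃ b, (glueParent T1 T2)^[n] (Sum.inr (Sum.inr v)) = Sum.inl b) := by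
  induction n generalizing v with
  | zero => exact Or.inl ⟨v, rfl⟩
  | succ n ih =>
    rw [Function.iterate_succ_apply]
    by_cases hp : T2.parent v.1 = T2.root
    · rw [glueParent_pos2 T1 T2 v hp]
      exact Or.inr (glue_iterate_inl T1 T2 n false)
    · rw [glueParent_neg2 T1 T2 v hp]
      exact ih _

theorem glue_join1 (v : {v : T1.V // v ≠ T1.root}) :
    ∃ n, (glueParent T1 T2)^[n] (Sum.inr (Sum.inl v)) = Sum.inl false := by
  obtain ⟨k, hk⟩ := PPTree.le_rho v.2
  refine ⟨k + 1, ?_⟩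
  rw [Function.iterate_succ_apply',
    glue_mirror1 T1 T2 k v (by rw [hk]; exact T1.rho_ne_root)]
  refine glueParent_pos1 T1 T2 _ ?_
  show T1.parent (T1.parent^[k] v.1) = T1.root
  rw [hk]; exact PPTree.parent_rho

theorem glue_join2 (v : {v : T2.V // v ≠ T2.root}) :
    ∃ n, (glueParent T1 T2)^[n] (Sum.inr (Sum.inr v)) = Sum.inl false := by
  obtain ⟨k, hk⟩ := PPTree.le_rho v.2
  refine ⟨k + 1, ?_⟩
  rw [Function.iterate_succ_apply',
    glue_mirror2 T1 T2 k v (by rw [hk]; exact T2.rho_ne_root)]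
  refine glueParent_pos2 T1 T2 _ ?_
  show T2.parent (T2.parent^[k] v.1) = T2.root
  rw [hk]; exact PPTree.parent_rho

end Glue
section Glue2

variable (T1 T2 : PPTree)

def glue : PPTree where
  V := GlueV T1 T2
  root := Sum.inl true
  parent := glueParent T1 T2
  parent_root := rfl
  reach := by
    rintro (b | (v | v))
    · exact ⟨1, rfl⟩
    · obtain ⟨n, hn⟩ := glue_join1 T1 T2 v
      exact ⟨n + 1, by rw [Function.iterate_succ_apply', hn]; rfl⟩
    · obtain ⟨n, hn⟩ := glue_join2 T1 T2 v
      exact ⟨n + 1, by rw [Function.iterate_succ_apply', hn]; rfl⟩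
  planted := by
    refine ⟨Sum.inl false, ⟨by simp, rfl⟩, ?_⟩
    rintro (b | (v | v)) ⟨hne, hpar⟩
    · cases b
      · rfl
      · exact absurd rfl hne
    · exfalso
      by_cases hp : T1.parent v.1 = T1.root
      · rw [glueParent_pos1 T1 T2 v hp] at hpar; simp at hpar
      · rw [glueParent_neg1 T1 T2 v hp] at hpar; simp at hpar
    · exfalso
      by_cases hp : T2.parent v.1 = T2.root
      · rw [glueParent_pos2 T1 T2 v hp] at hpar; simp at hpar
      · rw [glueParent_neg2 T1 T2 v hp] at hpar; simp at hpar
  phylo := by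
    rintro (b | (w | w)) hroot ⟨u, hu, hune⟩
    · -- the join vertex
      have hb : b = false := by
        cases b
        · rfl
        · exact absurd rfl hroot
      subst hb
      refine ⟨Sum.inr (Sum.inl ⟨T1.rho, T1.rho_ne_root⟩),
              Sum.inr (Sum.inr ⟨T2.rho, T2.rho_ne_root⟩),
              glueParent_pos1 T1 T2 _ PPTree.parent_rho,
              glueParent_pos2 T1 T2 _ PPTree.parent_rho, by simp, by simp, by simp⟩
    · -- inner vertex from T1
      rcases u with b | u | u
      · exact absurd hu (by simp [glueParent])
      · by_cases hp : T1.parent u.1 = T1.root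
        · rw [glueParent_pos1 T1 T2 u hp] at hu
          exact absurd hu (by simp)
        · rw [glueParent_neg1 T1 T2 u hp] at hu
          have hx : T1.parent u.1 = w.1 :=
            congrArg Subtype.val (Sum.inl.inj (Sum.inr.inj hu))
          have hxw : u.1 ≠ w.1 := fun hh => hune (by
            apply congrArg (fun z => Sum.inr (Sum.inl z) : _ → GlueV T1 T2)
            exact Subtype.ext hh)
          obtain ⟨a, a', ha, ha', haa, haw, ha'w⟩ := T1.phylo w.1 w.2 ⟨u.1, hx, hxw⟩
          have har : a ≠ T1.root := fun hh => w.2 (by rw [← ha, hh, T1.parent_root])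
          have ha'r : a' ≠ T1.root := fun hh => w.2 (by rw [← ha', hh, T1.parent_root])
          have hpar : T1.parent a ≠ T1.root := by rw [ha]; exact w.2
          have hpa'r : T1.parent a' ≠ T1.root := by rw [ha']; exact w.2
          refine ⟨Sum.inr (Sum.inl ⟨a, har⟩), Sum.inr (Sum.inl ⟨a', ha'r⟩), ?_, ?_, ?_, ?_, ?_⟩
          · rw [glueParent_neg1 T1 T2 _ hpar]
            exact congrArg (fun z => Sum.inr (Sum.inl z) : _ → GlueV T1 T2) (Subtype.ext ha)
          · rw [glueParent_neg1 T1 T2 _ hpa'r]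
            exact congrArg (fun z => Sum.inr (Sum.inl z) : _ → GlueV T1 T2) (Subtype.ext ha')
          · simpa using haa
          · simpa [Subtype.ext_iff] using haw
          · simpa [Subtype.ext_iff] using ha'w
      · exfalso
        by_cases hp : T2.parent u.1 = T2.root
        · rw [glueParent_pos2 T1 T2 u hp] at hu; simp at hu
        · rw [glueParent_neg2 T1 T2 u hp] at hu; simp at hu
    · -- inner vertex from T2
      rcases u with b | u | u
      · exact absurd hu (by simp [glueParent])
      · exfalso
        by_cases hp : T1.parent u.1 = T1.root
        · rw [glueParent_pos1 T1 T2 u hp] at hu; simp at hu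
        · rw [glueParent_neg1 T1 T2 u hp] at hu; simp at hu
      · by_cases hp : T2.parent u.1 = T2.root
        · rw [glueParent_pos2 T1 T2 u hp] at hu
          exact absurd hu (by simp)
        · rw [glueParent_neg2 T1 T2 u hp] at hu
          have hx : T2.parent u.1 = w.1 :=
            congrArg Subtype.val (Sum.inr.inj (Sum.inr.inj hu))
          have hxw : u.1 ≠ w.1 := fun hh => hune (by
            apply congrArg (fun z => Sum.inr (Sum.inr z) : _ → GlueV T1 T2)
            exact Subtype.ext hh)
          obtain ⟨a, a', ha, ha', haa, haw, ha'w⟩ := T2.phylo w.1 w.2 ⟨u.1, hx, hxw⟩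
          have har : a ≠ T2.root := fun hh => w.2 (by rw [← ha, hh, T2.parent_root])
          have ha'r : a' ≠ T2.root := fun hh => w.2 (by rw [← ha', hh, T2.parent_root])
          have hpar : T2.parent a ≠ T2.root := by rw [ha]; exact w.2
          have hpa'r : T2.parent a' ≠ T2.root := by rw [ha']; exact w.2
          refine ⟨Sum.inr (Sum.inr ⟨a, har⟩), Sum.inr (Sum.inr ⟨a', ha'r⟩), ?_, ?_, ?_, ?_, ?_⟩
          · rw [glueParent_neg2 T1 T2 _ hpar]
            exact congrArg (fun z => Sum.inr (Sum.inr z) : _ → GlueV T1 T2) (Subtype.ext ha)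
          · rw [glueParent_neg2 T1 T2 _ hpa'r]
            exact congrArg (fun z => Sum.inr (Sum.inr z) : _ → GlueV T1 T2) (Subtype.ext ha')
          · simpa using haa
          · simpa [Subtype.ext_iff] using haw
          · simpa [Subtype.ext_iff] using ha'w

theorem glue_parent_def : (glue T1 T2).parent = glueParent T1 T2 := rfl

theorem glue_root_def : (glue T1 T2).root = Sum.inl true := rfl

end Glue2
section Glue3

variable (T1 T2 : PPTree)

theorem glue_le1 (v w : {v : T1.V // v ≠ T1.root}) :
    (glue T1 T2).le (Sum.inr (Sum.inl v)) (Sum.inr (Sum.inl w)) ↔ T1.le v.1 w.1 := by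
  constructor
  · rintro ⟨n, hn⟩
    exact ⟨n, glue_project1 T1 T2 n v w hn⟩
  · rintro ⟨n, hn⟩
    refine ⟨n, ?_⟩
    show (glueParent T1 T2)^[n] _ = _
    rw [glue_mirror1 T1 T2 n v (by rw [hn]; exact w.2)]
    exact congrArg (fun z => Sum.inr (Sum.inl z) : _ → GlueV T1 T2) (Subtype.ext hn)

theorem glue_le2 (v w : {v : T2.V // v ≠ T2.root}) :
    (glue T1 T2).le (Sum.inr (Sum.inr v)) (Sum.inr (Sum.inr w)) ↔ T2.le v.1 w.1 := by
  constructor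
  · rintro ⟨n, hn⟩
    exact ⟨n, glue_project2 T1 T2 n v w hn⟩
  · rintro ⟨n, hn⟩
    refine ⟨n, ?_⟩
    show (glueParent T1 T2)^[n] _ = _
    rw [glue_mirror2 T1 T2 n v (by rw [hn]; exact w.2)]
    exact congrArg (fun z => Sum.inr (Sum.inr z) : _ → GlueV T1 T2) (Subtype.ext hn)

theorem glue_le_join1' (v : {v : T1.V // v ≠ T1.root}) :
    (glue T1 T2).le (Sum.inr (Sum.inl v)) (Sum.inl false) :=
  glue_join1 T1 T2 v

theorem glue_le_join2' (v : {v : T2.V // v ≠ T2.root}) :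
    (glue T1 T2).le (Sum.inr (Sum.inr v)) (Sum.inl false) :=
  glue_join2 T1 T2 v

theorem glue_lca1 (x y : {v : T1.V // v ≠ T1.root}) :
    (glue T1 T2).lca (Sum.inr (Sum.inl x)) (Sum.inr (Sum.inl y)) =
      Sum.inr (Sum.inl ⟨T1.lca x.1 y.1, PPTree.lca_ne_root x.2 y.2⟩) := by
  obtain ⟨hx, hy, hmin⟩ := PPTree.lca_spec x.1 y.1
  apply PPTree.lca_eq_of_spec
  · exact (glue_le1 T1 T2 x _).mpr hx
  · exact (glue_le1 T1 T2 y _).mpr hy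
  · rintro (b | (u | u)) hxw hyw
    · cases b
      · exact glue_le_join1' T1 T2 _
      · exact PPTree.le_root _
    · obtain ⟨n, hn⟩ := hxw
      obtain ⟨m, hm⟩ := hyw
      have h1 : T1.le x.1 u.1 := ⟨n, glue_project1 T1 T2 n x u hn⟩
      have h2 : T1.le y.1 u.1 := ⟨m, glue_project1 T1 T2 m y u hm⟩
      exact (glue_le1 T1 T2 _ _).mpr (hmin u.1 h1 h2)
    · obtain ⟨n, hn⟩ := hxw
      rcases glue_classify1 T1 T2 n x with ⟨u', hu'⟩ | ⟨b, hb⟩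
      · rw [show (glue T1 T2).parent^[n] (Sum.inr (Sum.inl x)) =
          (glueParent T1 T2)^[n] (Sum.inr (Sum.inl x)) from rfl, hu'] at hn
        exact absurd hn (by intro h; cases h)
      · rw [show (glue T1 T2).parent^[n] (Sum.inr (Sum.inl x)) =
          (glueParent T1 T2)^[n] (Sum.inr (Sum.inl x)) from rfl, hb] at hn
        exact absurd hn (by simp)

theorem glue_lca2 (x y : {v : T2.V // v ≠ T2.root}) :
    (glue T1 T2).lca (Sum.inr (Sum.inr x)) (Sum.inr (Sum.inr y)) =
      Sum.inr (Sum.inr ⟨T2.lca x.1 y.1, PPTree.lca_ne_root x.2 y.2⟩) := by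
  obtain ⟨hx, hy, hmin⟩ := PPTree.lca_spec x.1 y.1
  apply PPTree.lca_eq_of_spec
  · exact (glue_le2 T1 T2 x _).mpr hx
  · exact (glue_le2 T1 T2 y _).mpr hy
  · rintro (b | (u | u)) hxw hyw
    · cases b
      · exact glue_le_join2' T1 T2 _
      · exact PPTree.le_root _
    · obtain ⟨n, hn⟩ := hxw
      rcases glue_classify2 T1 T2 n x with ⟨u', hu'⟩ | ⟨b, hb⟩
      · rw [show (glue T1 T2).parent^[n] (Sum.inr (Sum.inr x)) =
          (glueParent T1 T2)^[n] (Sum.inr (Sum.inr x)) from rfl, hu'] at hn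
        exact absurd hn (by intro h; cases h)
      · rw [show (glue T1 T2).parent^[n] (Sum.inr (Sum.inr x)) =
          (glueParent T1 T2)^[n] (Sum.inr (Sum.inr x)) from rfl, hb] at hn
        exact absurd hn (by simp)
    · obtain ⟨n, hn⟩ := hxw
      obtain ⟨m, hm⟩ := hyw
      have h1 : T2.le x.1 u.1 := ⟨n, glue_project2 T1 T2 n x u hn⟩
      have h2 : T2.le y.1 u.1 := ⟨m, glue_project2 T1 T2 m y u hm⟩
      exact (glue_le2 T1 T2 _ _).mpr (hmin u.1 h1 h2)

theorem glue_lca_cross (x : {v : T1.V // v ≠ T1.root}) (y : {v : T2.V // v ≠ T2.root}) :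
    (glue T1 T2).lca (Sum.inr (Sum.inl x)) (Sum.inr (Sum.inr y)) = Sum.inl false := by
  apply PPTree.lca_eq_of_spec
  · exact glue_le_join1' T1 T2 x
  · exact glue_le_join2' T1 T2 y
  · rintro (b | (u | u)) hxw hyw
    · cases b
      · exact PPTree.le_refl _
      · exact ⟨1, rfl⟩
    · obtain ⟨m, hm⟩ := hyw
      rcases glue_classify2 T1 T2 m y with ⟨u', hu'⟩ | ⟨b, hb⟩
      · rw [show (glue T1 T2).parent^[m] (Sum.inr (Sum.inr y)) =
          (glueParent T1 T2)^[m] (Sum.inr (Sum.inr y)) from rfl, hu'] at hm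
        exact absurd hm (by intro h; cases h)
      · rw [show (glue T1 T2).parent^[m] (Sum.inr (Sum.inr y)) =
          (glueParent T1 T2)^[m] (Sum.inr (Sum.inr y)) from rfl, hb] at hm
        exact absurd hm (by simp)
    · obtain ⟨n, hn⟩ := hxw
      rcases glue_classify1 T1 T2 n x with ⟨u', hu'⟩ | ⟨b, hb⟩
      · rw [show (glue T1 T2).parent^[n] (Sum.inr (Sum.inl x)) =
          (glueParent T1 T2)^[n] (Sum.inr (Sum.inl x)) from rfl, hu'] at hn
        exact absurd hn (by intro h; cases h)
      · rw [show (glue T1 T2).parent^[n] (Sum.inr (Sum.inl x)) =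
          (glueParent T1 T2)^[n] (Sum.inr (Sum.inl x)) from rfl, hb] at hn
        exact absurd hn (by simp)

theorem glue_isLeaf1 (v : {v : T1.V // v ≠ T1.root}) :
    (glue T1 T2).isLeaf (Sum.inr (Sum.inl v)) ↔ T1.isLeaf v.1 := by
  constructor
  · intro hl u hpu
    have hur : u ≠ T1.root := fun hh => v.2 (by rw [← hpu, hh, T1.parent_root])
    have hpu' : T1.parent u ≠ T1.root := by rw [hpu]; exact v.2
    have := hl (Sum.inr (Sum.inl ⟨u, hur⟩)) (by
      show glueParent T1 T2 (Sum.inr (Sum.inl ⟨u, hur⟩)) = Sum.inr (Sum.inl v)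
      rw [glueParent_neg1 T1 T2 _ hpu']
      exact congrArg (fun z => Sum.inr (Sum.inl z) : _ → GlueV T1 T2) (Subtype.ext hpu))
    have := Sum.inl.inj (Sum.inr.inj this)
    exact congrArg Subtype.val this
  · rintro hl (b | (u | u)) hpu
    · exact absurd (show (Sum.inl true : GlueV T1 T2) = Sum.inr (Sum.inl v) from hpu) (by simp)
    · by_cases hp : T1.parent u.1 = T1.root
      · rw [show (glue T1 T2).parent (Sum.inr (Sum.inl u)) = Sum.inl false from
          glueParent_pos1 T1 T2 u hp] at hpu
        exact absurd hpu (by simp)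
      · rw [show (glue T1 T2).parent (Sum.inr (Sum.inl u)) = _ from
          glueParent_neg1 T1 T2 u hp] at hpu
        have h1 : T1.parent u.1 = v.1 :=
          congrArg Subtype.val (Sum.inl.inj (Sum.inr.inj hpu))
        have := hl u.1 h1
        exact congrArg (fun z => Sum.inr (Sum.inl z) : _ → GlueV T1 T2) (Subtype.ext this)
    · exfalso
      by_cases hp : T2.parent u.1 = T2.root
      · rw [show (glue T1 T2).parent (Sum.inr (Sum.inr u)) = Sum.inl false from
          glueParent_pos2 T1 T2 u hp] at hpu
        simp at hpu
      · rw [show (glue T1 T2).parent (Sum.inr (Sum.inr u)) = _ from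
          glueParent_neg2 T1 T2 u hp] at hpu
        exact absurd hpu (by intro h; cases h)

theorem glue_isLeaf2 (v : {v : T2.V // v ≠ T2.root}) :
    (glue T1 T2).isLeaf (Sum.inr (Sum.inr v)) ↔ T2.isLeaf v.1 := by
  constructor
  · intro hl u hpu
    have hur : u ≠ T2.root := fun hh => v.2 (by rw [← hpu, hh, T2.parent_root])
    have hpu' : T2.parent u ≠ T2.root := by rw [hpu]; exact v.2
    have := hl (Sum.inr (Sum.inr ⟨u, hur⟩)) (by
      show glueParent T1 T2 (Sum.inr (Sum.inr ⟨u, hur⟩)) = Sum.inr (Sum.inr v)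
      rw [glueParent_neg2 T1 T2 _ hpu']
      exact congrArg (fun z => Sum.inr (Sum.inr z) : _ → GlueV T1 T2) (Subtype.ext hpu))
    have := Sum.inr.inj (Sum.inr.inj this)
    exact congrArg Subtype.val this
  · rintro hl (b | (u | u)) hpu
    · exact absurd (show (Sum.inl true : GlueV T1 T2) = Sum.inr (Sum.inr v) from hpu) (by simp)
    · exfalso
      by_cases hp : T1.parent u.1 = T1.root
      · rw [show (glue T1 T2).parent (Sum.inr (Sum.inl u)) = Sum.inl false from
          glueParent_pos1 T1 T2 u hp] at hpu
        simp at hpu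
      · rw [show (glue T1 T2).parent (Sum.inr (Sum.inl u)) = _ from
          glueParent_neg1 T1 T2 u hp] at hpu
        exact absurd hpu (by intro h; cases h)
    · by_cases hp : T2.parent u.1 = T2.root
      · rw [show (glue T1 T2).parent (Sum.inr (Sum.inr u)) = Sum.inl false from
          glueParent_pos2 T1 T2 u hp] at hpu
        exact absurd hpu (by simp)
      · rw [show (glue T1 T2).parent (Sum.inr (Sum.inr u)) = _ from
          glueParent_neg2 T1 T2 u hp] at hpu
        have h1 : T2.parent u.1 = v.1 :=
          congrArg Subtype.val (Sum.inr.inj (Sum.inr.inj hpu))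
        have := hl u.1 h1
        exact congrArg (fun z => Sum.inr (Sum.inr z) : _ → GlueV T1 T2) (Subtype.ext this)

theorem glue_leaves (l : GlueV T1 T2) (hl : (glue T1 T2).isLeaf l) :
    (∃ v : {v : T1.V // v ≠ T1.root}, l = Sum.inr (Sum.inl v) ∧ T1.isLeaf v.1) ∨
    (∃ v : {v : T2.V // v ≠ T2.root}, l = Sum.inr (Sum.inr v) ∧ T2.isLeaf v.1) := by
  rcases l with b | v | v
  · exfalso
    cases b
    · -- the join vertex has child rho1
      have := hl (Sum.inr (Sum.inl ⟨T1.rho, T1.rho_ne_root⟩))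
        (glueParent_pos1 T1 T2 _ PPTree.parent_rho)
      simp at this
    · -- the root has child the join vertex
      exact Bool.noConfusion (Sum.inl.inj (hl (Sum.inl false) rfl))
  · exact Or.inl ⟨v, rfl, (glue_isLeaf1 T1 T2 v).mp hl⟩
  · exact Or.inr ⟨v, rfl, (glue_isLeaf2 T1 T2 v).mp hl⟩

end Glue3
section GlueLeafTree

variable {W : Type} [Fintype W] [DecidableEq W] (A : Set W) [DecidablePred (· ∈ A)]
variable (TA : LeafTree {w : W // w ∈ A}) (TB : LeafTree {w : W // w ∉ A})

def glueEmb : W → GlueV TA.toPPTree TB.toPPTree := fun w =>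
  if hw : w ∈ A then
    Sum.inr (Sum.inl ⟨TA.emb ⟨w, hw⟩, PPTree.isLeaf_ne_root (TA.emb_leaf ⟨w, hw⟩)⟩)
  else
    Sum.inr (Sum.inr ⟨TB.emb ⟨w, hw⟩, PPTree.isLeaf_ne_root (TB.emb_leaf ⟨w, hw⟩)⟩)

theorem glueEmb_pos {w : W} (hw : w ∈ A) :
    glueEmb A TA TB w = Sum.inr (Sum.inl
      ⟨TA.emb ⟨w, hw⟩, PPTree.isLeaf_ne_root (TA.emb_leaf ⟨w, hw⟩)⟩) := dif_pos hw

theorem glueEmb_neg {w : W} (hw : w ∉ A) :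
    glueEmb A TA TB w = Sum.inr (Sum.inr
      ⟨TB.emb ⟨w, hw⟩, PPTree.isLeaf_ne_root (TB.emb_leaf ⟨w, hw⟩)⟩) := dif_neg hw

def glueLeafTree : LeafTree W where
  toPPTree := glue TA.toPPTree TB.toPPTree
  emb := glueEmb A TA TB
  emb_inj := by
    intro x y h
    by_cases hx : x ∈ A <;> by_cases hy : y ∈ A
    · rw [glueEmb_pos A TA TB hx, glueEmb_pos A TA TB hy] at h
      have h1 : TA.emb ⟨x, hx⟩ = TA.emb ⟨y, hy⟩ :=
        congrArg Subtype.val (Sum.inl.inj (Sum.inr.inj h))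
      exact congrArg Subtype.val (TA.emb_inj h1)
    · rw [glueEmb_pos A TA TB hx, glueEmb_neg A TA TB hy] at h
      exact absurd h (by intro h; cases h)
    · rw [glueEmb_neg A TA TB hx, glueEmb_pos A TA TB hy] at h
      exact absurd h (by intro h; cases h)
    · rw [glueEmb_neg A TA TB hx, glueEmb_neg A TA TB hy] at h
      have h1 : TB.emb ⟨x, hx⟩ = TB.emb ⟨y, hy⟩ :=
        congrArg Subtype.val (Sum.inr.inj (Sum.inr.inj h))
      exact congrArg Subtype.val (TB.emb_inj h1)
  emb_leaf := by
    intro v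
    by_cases hv : v ∈ A
    · rw [show glueEmb A TA TB v = _ from glueEmb_pos A TA TB hv]
      exact (glue_isLeaf1 _ _ _).mpr (TA.emb_leaf ⟨v, hv⟩)
    · rw [show glueEmb A TA TB v = _ from glueEmb_neg A TA TB hv]
      exact (glue_isLeaf2 _ _ _).mpr (TB.emb_leaf ⟨v, hv⟩)
  emb_surj := by
    intro l hl
    rcases glue_leaves _ _ l hl with ⟨v, rfl, hv⟩ | ⟨v, rfl, hv⟩
    · obtain ⟨a, ha⟩ := TA.emb_surj v.1 hv
      refine ⟨a.1, ?_⟩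
      rw [show glueEmb A TA TB a.1 = _ from glueEmb_pos A TA TB a.2]
      exact congrArg (fun z => Sum.inr (Sum.inl z) : _ → GlueV TA.toPPTree TB.toPPTree)
        (Subtype.ext ha)
    · obtain ⟨a, ha⟩ := TB.emb_surj v.1 hv
      refine ⟨a.1, ?_⟩
      rw [show glueEmb A TA TB a.1 = _ from glueEmb_neg A TA TB a.2]
      exact congrArg (fun z => Sum.inr (Sum.inr z) : _ → GlueV TA.toPPTree TB.toPPTree)
        (Subtype.ext ha)

end GlueLeafTree

def glueLabel (T1 T2 : PPTree) (tA : T1.V → Bool) (tB : T2.V → Bool) (b : Bool) :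
    GlueV T1 T2 → Bool
  | Sum.inl _ => b
  | Sum.inr (Sum.inl u) => tA u.1
  | Sum.inr (Sum.inr u) => tB u.1

section GlueSpec

variable {W : Type} [Fintype W] [DecidableEq W] (A : Set W) [DecidablePred (· ∈ A)]
variable (TA : LeafTree {w : W // w ∈ A}) (TB : LeafTree {w : W // w ∉ A})

theorem glueLeafTree_spec (G : SimpleGraph W)
    (tA : TA.toPPTree.V → Bool) (tB : TB.toPPTree.V → Bool) (b : Bool)
    (hA : ∀ x y : {w : W // w ∈ A}, (G.comap Subtype.val).Adj x y ↔
        x ≠ y ∧ tA (TA.toPPTree.lca (TA.emb x) (TA.emb y)) = true)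
    (hB : ∀ x y : {w : W // w ∉ A}, (G.comap Subtype.val).Adj x y ↔
        x ≠ y ∧ tB (TB.toPPTree.lca (TB.emb x) (TB.emb y)) = true)
    (hcross : ∀ x y : W, x ∈ A → y ∉ A → (G.Adj x y ↔ b = true)) :
    ∀ x y : W, G.Adj x y ↔ x ≠ y ∧
      glueLabel TA.toPPTree TB.toPPTree tA tB b
        ((glueLeafTree A TA TB).toPPTree.lca ((glueLeafTree A TA TB).emb x)
          ((glueLeafTree A TA TB).emb y)) = true := by
  intro x y
  show G.Adj x y ↔ x ≠ y ∧ glueLabel TA.toPPTree TB.toPPTree tA tB b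
    ((glue TA.toPPTree TB.toPPTree).lca (glueEmb A TA TB x) (glueEmb A TA TB y)) = true
  by_cases hx : x ∈ A <;> by_cases hy : y ∈ A
  · rw [glueEmb_pos A TA TB hx, glueEmb_pos A TA TB hy, glue_lca1]
    have h' := hA ⟨x, hx⟩ ⟨y, hy⟩
    rw [SimpleGraph.comap_adj] at h'
    rw [show (Subtype.val (⟨x, hx⟩ : {w : W // w ∈ A})) = x from rfl,
      show (Subtype.val (⟨y, hy⟩ : {w : W // w ∈ A})) = y from rfl] at h'
    rw [h']
    simp only [glueLabel, ne_eq, Subtype.mk.injEq]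
  · rw [glueEmb_pos A TA TB hx, glueEmb_neg A TA TB hy, glue_lca_cross]
    simp only [glueLabel]
    rw [hcross x y hx hy]
    exact ⟨fun hb => ⟨fun hh => hy (hh ▸ hx), hb⟩, fun h => h.2⟩
  · rw [glueEmb_neg A TA TB hx, glueEmb_pos A TA TB hy,
      PPTree.lca_comm (T := glue TA.toPPTree TB.toPPTree) (Sum.inr (Sum.inr _)) (Sum.inr (Sum.inl _)),
      glue_lca_cross]
    simp only [glueLabel]
    rw [SimpleGraph.adj_comm, hcross y x hy hx]
    exact ⟨fun hb => ⟨fun hh => hx (hh ▸ hy), hb⟩, fun h => h.2⟩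
  · rw [glueEmb_neg A TA TB hx, glueEmb_neg A TA TB hy, glue_lca2]
    have h' := hB ⟨x, hx⟩ ⟨y, hy⟩
    rw [SimpleGraph.comap_adj] at h'
    rw [show (Subtype.val (⟨x, hx⟩ : {w : W // w ∉ A})) = x from rfl,
      show (Subtype.val (⟨y, hy⟩ : {w : W // w ∉ A})) = y from rfl] at h'
    rw [h']
    simp only [glueLabel, ne_eq, Subtype.mk.injEq]

end GlueSpec

def singletonTree : PPTree where
  V := Bool
  root := true
  parent := fun _ => true
  parent_root := rfl
  reach := fun _ => ⟨1, rfl⟩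
  planted := ⟨false, ⟨Bool.false_ne_true, rfl⟩, by
    rintro y ⟨h1, _⟩
    cases y
    · rfl
    · exact absurd rfl h1⟩
  phylo := by
    rintro v hv ⟨u, hu, _⟩
    exact absurd hu.symm hv

def singletonLeafTree (W : Type) [Fintype W] [DecidableEq W] [Nonempty W]
    (hW : Fintype.card W = 1) : LeafTree W where
  toPPTree := singletonTree
  emb := fun _ => false
  emb_inj := by
    intro a b _
    have : Subsingleton W := Fintype.card_le_one_iff_subsingleton.mp (le_of_eq hW)
    exact Subsingleton.elim a b
  emb_leaf := by
    intro _ u hu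
    exact absurd hu (by simp [singletonTree])
  emb_surj := by
    intro l hl
    cases l
    · exact ⟨Classical.arbitrary W, rfl⟩
    · exact absurd (hl false rfl) (by simp)
section Graphs

variable {W : Type}

theorem IsCograph.comap_subtype {G : SimpleGraph W} (h : IsCograph G) (p : W → Prop) :
    IsCograph (G.comap (Subtype.val : Subtype p → W)) := by
  rintro ⟨a, b, c, d, hab, hac, had, hbc, hbd, hcd, e1, e2, e3, n1, n2, n3⟩
  exact h ⟨a.1, b.1, c.1, d.1,
    fun hh => hab (Subtype.ext hh), fun hh => hac (Subtype.ext hh),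
    fun hh => had (Subtype.ext hh), fun hh => hbc (Subtype.ext hh),
    fun hh => hbd (Subtype.ext hh), fun hh => hcd (Subtype.ext hh),
    e1, e2, e3, n1, n2, n3⟩

theorem IsCograph.compl {G : SimpleGraph W} (h : IsCograph G) : IsCograph Gᶜ := by
  rintro ⟨a, b, c, d, hab, hac, had, hbc, hbd, hcd, e1, e2, e3, n1, n2, n3⟩
  simp only [SimpleGraph.compl_adj, not_and, not_not] at e1 e2 e3 n1 n2 n3
  exact h ⟨b, d, a, c, hbd, Ne.symm hab, hbc, Ne.symm had, Ne.symm hcd, hac,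
    n3 hbd, (n2 had).symm, n1 hac,
    fun hh => e1.2 hh.symm, e2.2, fun hh => e3.2 hh.symm⟩

theorem reachable_first_step {G : SimpleGraph W} {x y : W}
    (h : G.Reachable x y) (hxy : x ≠ y) : ∃ z, G.Adj x z := by
  obtain ⟨w⟩ := h
  cases w with
  | nil => exact absurd rfl hxy
  | cons h' _ => exact ⟨_, h'⟩

theorem exists_flip {α : Type} {G' : SimpleGraph α} (p : α → Prop) :
    ∀ {c u : α}, G'.Walk c u → p c → ¬ p u →
      ∃ a b, G'.Adj a b ∧ p a ∧ ¬ p b ∧ G'.Reachable c a := by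
  intro c u w
  induction w with
  | nil => intro h1 h2; exact absurd h1 h2
  | @cons cc yy uu h w ih =>
    intro h1 h2
    by_cases hy : p yy
    · obtain ⟨a, b, hab, ha, hb, hr⟩ := ih hy h2
      exact ⟨a, b, hab, ha, hb, h.reachable.trans hr⟩
    · exact ⟨cc, yy, h, h1, hy, SimpleGraph.Reachable.refl _⟩

theorem to_neighbor (G : SimpleGraph W) :
    ∀ {x v : W}, G.Walk x v → ∀ (hx : x ≠ v),
    ∃ c : {w : W // w ≠ v}, G.Adj v c.1 ∧
      (G.comap (Subtype.val : {w : W // w ≠ v} → W)).Reachable ⟨x, hx⟩ c := by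
  intro x v w
  induction w with
  | nil => intro hx; exact absurd rfl hx
  | @cons a b c h w ih =>
    intro hx
    by_cases hb : b = c
    · subst hb
      exact ⟨⟨a, hx⟩, h.symm, SimpleGraph.Reachable.refl _⟩
    · obtain ⟨c', hc1, hc2⟩ := ih hb
      refine ⟨c', hc1, ?_⟩
      have hadj : (G.comap (Subtype.val : {w : W // w ≠ c} → W)).Adj ⟨a, hx⟩ ⟨b, hb⟩ := h
      exact hadj.reachable.trans hc2

theorem comap_compl (G : SimpleGraph W) (p : W → Prop) :
    (G.comap (Subtype.val : Subtype p → W))ᶜ = Gᶜ.comap (Subtype.val : Subtype p → W) := by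
  ext a b
  simp only [SimpleGraph.compl_adj, SimpleGraph.comap_adj]
  constructor
  · rintro ⟨h1, h2⟩; exact ⟨fun hh => h1 (Subtype.ext hh), h2⟩
  · rintro ⟨h1, h2⟩; exact ⟨fun hh => h1 (congrArg Subtype.val hh), h2⟩

theorem find_p4 [Fintype W] [DecidableEq W] (G : SimpleGraph W) (v : W)
    (hc : G.Connected) (hcc : Gᶜ.Connected) (hcard : 2 ≤ Fintype.card W)
    (hdisc : ¬(G.comap (Subtype.val : {w : W // w ≠ v} → W)).Connected) :
    ∃ a b c d : W, a ≠ b ∧ a ≠ c ∧ a ≠ d ∧ b ≠ c ∧ b ≠ d ∧ c ≠ d ∧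
      G.Adj a b ∧ G.Adj b c ∧ G.Adj c d ∧ ¬G.Adj a c ∧ ¬G.Adj a d ∧ ¬G.Adj b d := by
  classical
  have hne : Nonempty {w : W // w ≠ v} := by
    obtain ⟨u, hu⟩ := Fintype.exists_ne_of_one_lt_card (by omega) v
    exact ⟨⟨u, hu⟩⟩
  have hpre : ∃ p q : {w : W // w ≠ v},
      ¬(G.comap (Subtype.val : {w : W // w ≠ v} → W)).Reachable p q := by
    by_contra hforall
    push_neg at hforall
    exact hdisc (SimpleGraph.connected_iff _ |>.mpr ⟨fun p q => hforall p q, hne⟩)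
  obtain ⟨p, q, hpq⟩ := hpre
  -- a non-neighbor z of v
  obtain ⟨u0, hu0⟩ := Fintype.exists_ne_of_one_lt_card (by omega) v
  obtain ⟨z, hz⟩ := reachable_first_step (hcc.preconnected v u0) (Ne.symm hu0)
  have hvz : v ≠ z := hz.ne
  have hnadj : ¬G.Adj v z := ((SimpleGraph.compl_adj G v z).mp hz).2
  set x0 : {w : W // w ≠ v} := ⟨z, Ne.symm hvz⟩ with hx0
  -- a vertex in another component
  have hex_d0 : ∃ d0 : {w : W // w ≠ v},
      ¬(G.comap (Subtype.val : {w : W // w ≠ v} → W)).Reachable x0 d0 := by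
    by_cases hpx : (G.comap (Subtype.val : {w : W // w ≠ v} → W)).Reachable p x0
    · exact ⟨q, fun hr => hpq (hpx.trans hr)⟩
    · exact ⟨p, fun hr => hpx hr.symm⟩
  obtain ⟨d0, hd0⟩ := hex_d0
  -- a neighbor c1 of v in x0's component
  obtain ⟨c1, hc1adj, hc1reach⟩ :=
    to_neighbor G ((hc.preconnected z v).some) (Ne.symm hvz)
  -- a neighbor c2 of v in d0's component
  obtain ⟨c2, hc2adj, hc2reach⟩ :=
    to_neighbor G ((hc.preconnected d0.1 v).some) d0.2
  -- flip along a walk from c1 to x0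
  obtain ⟨a, b, hab, hpa, hpb, hreach⟩ :=
    exists_flip (fun t : {w : W // w ≠ v} => G.Adj v t.1)
      (hc1reach.symm.some) hc1adj hnadj
  have hx0a : (G.comap (Subtype.val : {w : W // w ≠ v} → W)).Reachable x0 a :=
    hc1reach.trans hreach
  have hx0b : (G.comap (Subtype.val : {w : W // w ≠ v} → W)).Reachable x0 b :=
    hx0a.trans hab.reachable
  have hnr : ¬(G.comap (Subtype.val : {w : W // w ≠ v} → W)).Reachable x0 c2 :=
    fun hr => hd0 (hr.trans hc2reach.symm)
  refine ⟨b.1, a.1, v, c2.1,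
    fun hh => hab.ne' (Subtype.ext hh),
    b.2,
    fun hh => hnr (Subtype.ext hh ▸ hx0b),
    a.2,
    fun hh => hnr (Subtype.ext hh ▸ hx0a),
    Ne.symm c2.2,
    hab.symm, hpa.symm, hc2adj,
    fun hh => hpb hh.symm,
    fun hh => hnr (hx0b.trans
      (SimpleGraph.Adj.reachable
        (show (G.comap (Subtype.val : {w : W // w ≠ v} → W)).Adj b c2 from hh))),
    fun hh => hnr (hx0a.trans
      (SimpleGraph.Adj.reachable
        (show (G.comap (Subtype.val : {w : W // w ≠ v} → W)).Adj a c2 from hh)))⟩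

theorem seinsche : ∀ (n : ℕ) (W : Type) [Fintype W] [DecidableEq W],
    Fintype.card W ≤ n → 2 ≤ Fintype.card W → ∀ G : SimpleGraph W, IsCograph G →
    ¬G.Connected ∨ ¬Gᶜ.Connected := by
  intro n
  induction n with
  | zero => intro W _ _ h1 h2; omega
  | succ n ih =>
    intro W _ _ hle h2 G hG
    by_contra hcon
    push_neg at hcon
    obtain ⟨hc, hcc⟩ := hcon
    by_cases hcard : Fintype.card W = 2
    · -- exactly two vertices
      obtain ⟨v⟩ : Nonempty W := Fintype.card_pos_iff.mp (by omega)
      obtain ⟨u, hu⟩ := Fintype.exists_ne_of_one_lt_card (by omega) v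
      obtain ⟨z, hz⟩ := reachable_first_step (hc.preconnected v u) (Ne.symm hu)
      obtain ⟨z', hz'⟩ := reachable_first_step (hcc.preconnected v u) (Ne.symm hu)
      have hsub : Fintype.card {w : W // w ≠ v} ≤ 1 := by
        have : Fintype.card {w : W // w ≠ v} = Fintype.card W - 1 := by
          simp [Fintype.card_subtype_compl]
        omega
      have hzz : z = z' := by
        have hs : Subsingleton {w : W // w ≠ v} :=
          Fintype.card_le_one_iff_subsingleton.mp hsub
        have := Subsingleton.elim (⟨z, hz.ne'⟩ : {w : W // w ≠ v}) ⟨z', hz'.ne'⟩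
        exact congrArg Subtype.val this
      exact ((SimpleGraph.compl_adj G v z').mp hz').2 (hzz ▸ hz)
    · -- at least three vertices
      obtain ⟨v⟩ : Nonempty W := Fintype.card_pos_iff.mp (by omega)
      have hcard3 : 3 ≤ Fintype.card W := by omega
      have hsubcard : Fintype.card {w : W // w ≠ v} = Fintype.card W - 1 := by
        simp [Fintype.card_subtype_compl]
      have hG' : IsCograph (G.comap (Subtype.val : {w : W // w ≠ v} → W)) :=
        hG.comap_subtype _
      rcases ih {w : W // w ≠ v} (by omega) (by omega) _ hG' with hd | hd
      · exact hG (find_p4 G v hc hcc (by omega) hd)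
      · rw [comap_compl] at hd
        have := find_p4 Gᶜ v hcc (by rw [compl_compl]; exact hc) (by omega) hd
        exact hG.compl this

theorem decomp {W : Type} [Fintype W] [DecidableEq W] (G : SimpleGraph W)
    (hG : IsCograph G) (hcard : 2 ≤ Fintype.card W) :
    ∃ (A : Set W) (b : Bool), (∃ x, x ∈ A) ∧ (∃ x, x ∉ A) ∧
      ∀ x y : W, x ∈ A → y ∉ A → (G.Adj x y ↔ b = true) := by
  have hne : Nonempty W := Fintype.card_pos_iff.mp (by omega)
  rcases seinsche (Fintype.card W) W le_rfl hcard G hG with h | h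
  · have hpre : ∃ x y : W, ¬G.Reachable x y := by
      by_contra hforall
      push_neg at hforall
      exact h ((SimpleGraph.connected_iff G).mpr ⟨fun u v => hforall u v, hne⟩)
    obtain ⟨x, y, hxy⟩ := hpre
    refine ⟨{w | G.Reachable x w}, false, ⟨x, SimpleGraph.Reachable.refl x⟩, ⟨y, hxy⟩, ?_⟩
    intro p q hp hq
    exact ⟨fun hadj => absurd (hp.trans hadj.reachable) hq, fun hb => Bool.noConfusion hb⟩
  · have hpre : ∃ x y : W, ¬Gᶜ.Reachable x y := by
      by_contra hforall
      push_neg at hforall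
      exact h ((SimpleGraph.connected_iff Gᶜ).mpr ⟨fun u v => hforall u v, hne⟩)
    obtain ⟨x, y, hxy⟩ := hpre
    refine ⟨{w | Gᶜ.Reachable x w}, true, ⟨x, SimpleGraph.Reachable.refl x⟩, ⟨y, hxy⟩, ?_⟩
    intro p q hp hq
    refine ⟨fun _ => rfl, fun _ => ?_⟩
    by_contra hn
    have hne' : p ≠ q := fun hh => hq (hh ▸ hp)
    have : Gᶜ.Adj p q := (SimpleGraph.compl_adj G p q).mpr ⟨hne', hn⟩
    exact hq (hp.trans this.reachable)

end Graphs
theorem build_tree : ∀ (n : ℕ) (W : Type) [Fintype W] [DecidableEq W], Nonempty W →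
    Fintype.card W ≤ n → ∀ G : SimpleGraph W, IsCograph G →
    ∃ (T : LeafTree W) (t : T.toPPTree.V → Bool),
      ∀ x y : W, G.Adj x y ↔ x ≠ y ∧ t (T.toPPTree.lca (T.emb x) (T.emb y)) = true := by
  intro n
  induction n with
  | zero =>
    intro W _ _ hne hle G hG
    have hpos : 0 < Fintype.card W := Fintype.card_pos_iff.mpr hne
    omega
  | succ n ih =>
    intro W instF instD hne hle G hG
    classical
    haveI := hne
    by_cases h1 : Fintype.card W = 1
    · refine ⟨singletonLeafTree W h1, fun _ => false, ?_⟩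
      intro x y
      have hsub : Subsingleton W := Fintype.card_le_one_iff_subsingleton.mp (le_of_eq h1)
      constructor
      · intro hadj; exact absurd (Subsingleton.elim x y) hadj.ne
      · rintro ⟨hxy, _⟩; exact absurd (Subsingleton.elim x y) hxy
    · have hpos : 0 < Fintype.card W := Fintype.card_pos_iff.mpr hne
      have h2 : 2 ≤ Fintype.card W := by omega
      obtain ⟨A, b, ⟨xa, hxa⟩, ⟨xb, hxb⟩, hcross⟩ := decomp G hG h2
      have hlt1 : Fintype.card {w : W // w ∈ A} ≤ n := by
        have h' : Fintype.card {w : W // w ∈ A} < Fintype.card W :=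
          Fintype.card_subtype_lt (p := fun w => w ∈ A) (x := xb) hxb
        omega
      have hlt2 : Fintype.card {w : W // w ∉ A} ≤ n := by
        have h' : Fintype.card {w : W // w ∉ A} < Fintype.card W :=
          Fintype.card_subtype_lt (p := fun w => w ∉ A) (x := xa) (not_not_intro hxa)
        omega
      obtain ⟨TA, tA, hTA⟩ := ih {w : W // w ∈ A} ⟨⟨xa, hxa⟩⟩ hlt1
        (G.comap Subtype.val) (hG.comap_subtype _)
      obtain ⟨TB, tB, hTB⟩ := ih {w : W // w ∉ A} ⟨⟨xb, hxb⟩⟩ hlt2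
        (G.comap Subtype.val) (hG.comap_subtype _)
      exact ⟨glueLeafTree A TA TB, glueLabel TA.toPPTree TB.toPPTree tA tB b,
        glueLeafTree_spec A TA TB G tA tB b hTA hTB hcross⟩
/-- An undirected graph `G` is an orthology graph
`Θ(T,t)` for some tree `T` with leaf set `V(G)` and event labeling `t`
(with `true` = speciation `•` and `false` = duplication `□`) iff `G` is a
cograph. -/
theorem orthology_graph_iff_cograph
    {V : Type} [Fintype V] [DecidableEq V] [Nonempty V]
    (G : SimpleGraph V) :
    (∃ (T : LeafTree V) (t : T.toPPTree.V → Bool),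
        ∀ x y : V, G.Adj x y ↔
          x ≠ y ∧ t (T.toPPTree.lca (T.emb x) (T.emb y)) = true) ↔
    IsCograph G := by
  constructor
  · rintro ⟨T, t, h⟩
    exact orthology_forward G T t h
  · intro hG
    exact build_tree (Fintype.card V) V ‹Nonempty V› le_rfl G hG
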